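/- Let G be a finite group and B a finite set. Then the poset CS(G×B) of G-invariant cross-sections in the set-partition poset SP(G×B) is order-isomorphic to the poset Rh⁰_B(G) of SPCs on B over G. Explicitly, the map sending an invariant cross-section (G×B', Π) to the SPC (B', {B₁,…,Bₙ}, [f]) — where the Bᵢ are the subsets of B' determined by the G-orbits of Π-classes and fᵢ : Bᵢ → G is the partial function whose reversed graph is a chosen Π-class πᵢ with Gπᵢ a partition of G×Bᵢ — is a well-defined order isomorphism, with inverse sending (B', Θ, [f]) to (G×B', Π) where Π consists of all sets g·{(f(b), b) : b ∈ θ} for Θ-classes θ and g ∈ G. -/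

import Mathlib

/-- The left `G`-action on subsets of `G × B`: `g · Y = {(g h, b) : (h, b) ∈ Y}`. -/
def gAct {G B : Type} [Mul G] (g : G) (Y : Set (G × B)) : Set (G × B) :=
  (fun p : G × B => (g * p.1, p.2)) '' Y

/-- Left `G`-translation of a set of pairs in `B × G` (graphs of functions to `G`):
`(g · f)(b) = g · f(b)`. -/
def gTranslate {G B : Type} [Mul G] (g : G) (γ : Set (B × G)) : Set (B × G) :=
  (fun p : B × G => (p.1, g * p.2)) '' γ

/-- `C` is a partition of `Y`: a collection of nonempty pairwise disjoint sets
whose union is `Y`. -/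
def IsPartitionOf {α : Type} (C : Set (Set α)) (Y : Set α) : Prop :=
  (∀ c ∈ C, c.Nonempty) ∧ C.PairwiseDisjoint id ∧ ⋃₀ C = Y

/-- `(Y, P)` is a `G`-invariant cross-section in `SP(G × B)`: `P` is a partition
of `Y`, the pair is invariant under the `G`-action, and every class of `P` is a
cross-section (contains at most one element over each `b ∈ B`). -/
def IsInvariantCrossSection {G B : Type} [Group G]
    (Y : Set (G × B)) (P : Set (Set (G × B))) : Prop :=
  IsPartitionOf P Y ∧
  (∀ g : G, gAct g Y = Y ∧ (gAct g) '' P = P) ∧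
  (∀ π ∈ P, ∀ p ∈ π, ∀ q ∈ π, p.2 = q.2 → p.1 = q.1)

/-- `c` is a cross-section with domain `θ`: a `G`-orbit of (graphs of) functions
`θ → G` under left translation. -/
def IsCrossSectionClass {G B : Type} [Group G] (θ : Set B) (c : Set (Set (B × G))) : Prop :=
  c.Nonempty ∧
  (∀ γ ∈ c, ∃ f : B → G, γ = {p : B × G | p.1 ∈ θ ∧ p.2 = f p.1}) ∧
  (∀ γ ∈ c, ∀ g : G, gTranslate g γ ∈ c) ∧
  (∀ γ₁ ∈ c, ∀ γ₂ ∈ c, ∃ g : G, γ₂ = gTranslate g γ₁)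

/-- `(I, Θ, F)` is an SPC on `B` over `G`: `Θ` is a partition of `I ⊆ B` and `F`
assigns to each `Θ`-class `θ` a cross-section with domain `θ` (and `∅` to
non-classes, a normalization making the representation unique). -/
def IsSPC {G B : Type} [Group G]
    (I : Set B) (Θ : Set (Set B)) (F : Set B → Set (Set (B × G))) : Prop :=
  IsPartitionOf Θ I ∧
  (∀ θ ∈ Θ, IsCrossSectionClass θ (F θ)) ∧
  (∀ θ : Set B, θ ∉ Θ → F θ = ∅)

/-- The order on set-partition pairs: containment of sets and refinement of classes. -/
def SPle {G B : Type} (Y : Set (G × B)) (P : Set (Set (G × B)))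
    (Z : Set (G × B)) (Q : Set (Set (G × B))) : Prop :=
  Y ⊆ Z ∧ ∀ π ∈ P, ∃ ϑ ∈ Q, π ⊆ ϑ

/-- Restriction of a cross-section class to a smaller domain `θ`. -/
def restrictClass {G B : Type} (θ : Set B) (c : Set (Set (B × G))) : Set (Set (B × G)) :=
  (fun γ : Set (B × G) => {p ∈ γ | p.1 ∈ θ}) '' c

/-- The order on SPCs on `B` over `G`. -/
def SPCle {G B : Type} [Group G]
    (I : Set B) (Θ : Set (Set B)) (F : Set B → Set (Set (B × G)))
    (J : Set B) (τ : Set (Set B)) (H : Set B → Set (Set (B × G))) : Prop :=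
  I ⊆ J ∧
  (∀ θ ∈ Θ, ∃ τ' ∈ τ, θ ⊆ τ') ∧
  (∀ θ ∈ Θ, ∀ τ' ∈ τ, θ ⊆ τ' → restrictClass θ (H τ') = F θ)

/-- The map `CS(G×B) → Rh⁰_B(G)`: sends an invariant cross-section `(Y, P)` to the
SPC whose subset is the projection of `Y`, whose partition classes are the
projections of the `P`-classes, and whose cross-section at `θ` is the set of
reversed graphs of the `P`-classes projecting onto `θ`. -/
def csToSPC {G B : Type} (Y : Set (G × B)) (P : Set (Set (G × B))) :
    Set B × Set (Set B) × (Set B → Set (Set (B × G))) :=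
  (Prod.snd '' Y,
   (fun π : Set (G × B) => Prod.snd '' π) '' P,
   fun θ : Set B =>
     {γ : Set (B × G) | ∃ π ∈ P, Prod.snd '' π = θ ∧ γ = Prod.swap '' π})

/-- The map `Rh⁰_B(G) → CS(G×B)`: sends an SPC `(I, Θ, F)` to the pair whose set is
`G × I` and whose partition classes are the reversed graphs `g·{(f(b), b) : b ∈ θ}`
of all members of the cross-section classes. -/
def spcToCS {G B : Type} (I : Set B) (Θ : Set (Set B))
    (F : Set B → Set (Set (B × G))) :
    Set (G × B) × Set (Set (G × B)) :=
  ({p : G × B | p.2 ∈ I},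
   {π : Set (G × B) | ∃ θ ∈ Θ, ∃ γ ∈ F θ, π = Prod.swap '' γ})

section Aux
set_option linter.unusedSectionVars false

open Set

variable {G B : Type} [Group G]

lemma mem_gAct {g : G} {Y : Set (G × B)} {p : G × B} :
    p ∈ gAct g Y ↔ (g⁻¹ * p.1, p.2) ∈ Y := by
  constructor
  · rintro ⟨⟨h, b⟩, hq, rfl⟩; simpa using hq
  · intro h
    exact ⟨(g⁻¹ * p.1, p.2), h, by simp⟩

lemma mem_gTranslate {g : G} {γ : Set (B × G)} {p : B × G} :
    p ∈ gTranslate g γ ↔ (p.1, g⁻¹ * p.2) ∈ γ := by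
  constructor
  · rintro ⟨⟨b, h⟩, hq, rfl⟩; simpa using hq
  · intro h
    exact ⟨(p.1, g⁻¹ * p.2), h, by simp⟩

lemma gAct_one (Y : Set (G × B)) : gAct 1 Y = Y := by
  ext p; simp [mem_gAct]

lemma gTranslate_one (γ : Set (B × G)) : gTranslate 1 γ = γ := by
  ext p; simp [mem_gTranslate]

lemma gAct_comp (g h : G) (Y : Set (G × B)) : gAct g (gAct h Y) = gAct (g * h) Y := by
  ext p; simp [mem_gAct, mul_assoc]

lemma gAct_mono {g : G} {Y Z : Set (G × B)} (h : Y ⊆ Z) : gAct g Y ⊆ gAct g Z :=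
  Set.image_mono h

lemma snd_image_gAct (g : G) (π : Set (G × B)) :
    Prod.snd '' gAct g π = Prod.snd '' π := by
  simp [gAct, Set.image_image]

lemma swap_gAct (g : G) (π : Set (G × B)) :
    Prod.swap '' gAct g π = gTranslate g (Prod.swap '' π) := by
  simp [gAct, gTranslate, Set.image_image]

lemma gAct_swap (g : G) (γ : Set (B × G)) :
    gAct g (Prod.swap '' γ) = Prod.swap '' gTranslate g γ := by
  simp [gAct, gTranslate, Set.image_image]

lemma swap_swap_image {α β : Type} (s : Set (α × β)) :
    Prod.swap '' (Prod.swap '' s) = s := by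
  simp [Set.image_image]

lemma mem_swap_image {α β : Type} {s : Set (α × β)} {p : β × α} :
    p ∈ Prod.swap '' s ↔ Prod.swap p ∈ s := by
  constructor
  · rintro ⟨q, hq, rfl⟩; simpa using hq
  · intro h; exact ⟨Prod.swap p, h, Prod.swap_swap p⟩

lemma swap_restrict {θ : Set B} (s : Set (G × B)) :
    {p ∈ Prod.swap '' s | p.1 ∈ θ} = Prod.swap '' {q ∈ s | q.2 ∈ θ} := by
  ext p
  simp only [Set.mem_setOf_eq, mem_swap_image]
  constructor
  · rintro ⟨h1, h2⟩; exact ⟨h1, h2⟩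
  · rintro ⟨h1, h2⟩; exact ⟨h1, h2⟩

/-- classes of an invariant partition are closed under the action -/
lemma class_act {Y : Set (G × B)} {P : Set (Set (G × B))}
    (hCS : IsInvariantCrossSection Y P) {π : Set (G × B)} (hπ : π ∈ P) (g : G) :
    gAct g π ∈ P := by
  have := (hCS.2.1 g).2
  rw [← this]
  exact Set.mem_image_of_mem _ hπ

lemma class_eq {Y : Set (G × B)} {P : Set (Set (G × B))}
    (hCS : IsInvariantCrossSection Y P) {π₁ π₂ : Set (G × B)}
    (h₁ : π₁ ∈ P) (h₂ : π₂ ∈ P) {x : G × B} (hx₁ : x ∈ π₁) (hx₂ : x ∈ π₂) :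
    π₁ = π₂ := by
  by_contra hne
  exact Set.disjoint_left.mp (hCS.1.2.1 h₁ h₂ hne) hx₁ hx₂

lemma class_translate {Y : Set (G × B)} {P : Set (Set (G × B))}
    (hCS : IsInvariantCrossSection Y P) {π₁ π₂ : Set (G × B)}
    (h₁ : π₁ ∈ P) (h₂ : π₂ ∈ P) {b : B}
    (hb₁ : b ∈ Prod.snd '' π₁) (hb₂ : b ∈ Prod.snd '' π₂) :
    ∃ g : G, π₂ = gAct g π₁ := by
  obtain ⟨⟨g₁, b₁⟩, hm₁, hb₁'⟩ := hb₁
  obtain ⟨⟨g₂, b₂⟩, hm₂, hb₂'⟩ := hb₂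
  refine ⟨g₂ * g₁⁻¹, ?_⟩
  have hmem : ((g₂ * g₁⁻¹) * g₁, b₁) ∈ gAct (g₂ * g₁⁻¹) π₁ :=
    ⟨(g₁, b₁), hm₁, rfl⟩
  rw [inv_mul_cancel_right] at hmem
  have hb : b₂ = b₁ := hb₂'.trans hb₁'.symm
  rw [← hb] at hmem
  exact class_eq hCS h₂ (class_act hCS h₁ _) hm₂ hmem

/-- every cross-section class is the reversed graph of a function on its projection -/
lemma class_graph {π : Set (G × B)}
    (hcs : ∀ p ∈ π, ∀ q ∈ π, p.2 = q.2 → p.1 = q.1) :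
    ∃ f : B → G, Prod.swap '' π = {p : B × G | p.1 ∈ Prod.snd '' π ∧ p.2 = f p.1} := by
  classical
  refine ⟨fun b => if h : ∃ g : G, (g, b) ∈ π then h.choose else 1, ?_⟩
  ext ⟨b, g⟩
  simp only [mem_swap_image, Set.mem_setOf_eq, Prod.swap_prod_mk]
  constructor
  · intro hm
    have hex : ∃ g0 : G, (g0, b) ∈ π := ⟨g, hm⟩
    refine ⟨⟨(g, b), hm, rfl⟩, ?_⟩
    rw [dif_pos hex]
    exact (hcs _ hex.choose_spec _ hm rfl).symm
  · rintro ⟨⟨⟨g₀, b₀⟩, hm, hb⟩, hg⟩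
    cases hb
    have hex : ∃ g0 : G, (g0, b₀) ∈ π := ⟨g₀, hm⟩
    rw [dif_pos hex] at hg
    rw [hg]
    exact hex.choose_spec

/-- restriction of a larger cross-section class to the projection of a subclass -/
lemma restrict_eq {ϑ π : Set (G × B)}
    (hcs : ∀ p ∈ ϑ, ∀ q ∈ ϑ, p.2 = q.2 → p.1 = q.1) (hsub : π ⊆ ϑ) :
    {q ∈ ϑ | q.2 ∈ Prod.snd '' π} = π := by
  ext q
  simp only [Set.mem_setOf_eq]
  constructor
  · rintro ⟨hq, ⟨r, hr, hrq⟩⟩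
    have := hcs q hq r (hsub hr) hrq.symm
    have hqr : q = r := Prod.ext this hrq.symm
    rw [hqr]; exact hr
  · intro hq
    exact ⟨hsub hq, ⟨q, hq, rfl⟩⟩

end Aux


lemma graph_of {G B : Type} [Group G] {I : Set B} {Θ : Set (Set B)}
    {F : Set B → Set (Set (B × G))} (hS : IsSPC I Θ F)
    {θ : Set B} (hθ : θ ∈ Θ) {γ : Set (B × G)} (hγ : γ ∈ F θ) :
    ∃ f : B → G, γ = {p : B × G | p.1 ∈ θ ∧ p.2 = f p.1} :=
  (hS.2.1 θ hθ).2.1 γ hγ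

lemma forward_wd {G B : Type} [Group G] {Y : Set (G × B)} {P : Set (Set (G × B))}
    (hCS : IsInvariantCrossSection Y P) :
    IsSPC (csToSPC Y P).1 (csToSPC Y P).2.1 (csToSPC Y P).2.2 := by
  obtain ⟨⟨hne, hdisj, hun⟩, hinv, hcs⟩ := hCS
  have hCS' : IsInvariantCrossSection Y P := ⟨⟨hne, hdisj, hun⟩, hinv, hcs⟩
  simp only [csToSPC]
  refine ⟨⟨?_, ?_, ?_⟩, ?_, ?_⟩
  · rintro c ⟨π, hπ, rfl⟩
    exact (hne π hπ).image _
  · rintro θ₁ ⟨π₁, h₁, rfl⟩ θ₂ ⟨π₂, h₂, rfl⟩ hne'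
    refine Set.disjoint_left.mpr fun b hb₁ hb₂ => hne' ?_
    obtain ⟨g, rfl⟩ := class_translate hCS' h₁ h₂ hb₁ hb₂
    exact (snd_image_gAct g π₁).symm
  · ext b
    simp only [Set.mem_sUnion, Set.mem_image]
    constructor
    · rintro ⟨θ, ⟨π, hπ, rfl⟩, ⟨p, hp, rfl⟩⟩
      refine ⟨p, ?_, rfl⟩
      rw [← hun]
      exact ⟨π, hπ, hp⟩
    · rintro ⟨p, hp, rfl⟩
      rw [← hun] at hp
      obtain ⟨π, hπ, hpπ⟩ := hp
      exact ⟨Prod.snd '' π, ⟨π, hπ, rfl⟩, ⟨p, hpπ, rfl⟩⟩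
  · rintro θ ⟨π₀, h₀, rfl⟩
    refine ⟨⟨Prod.swap '' π₀, π₀, h₀, rfl, rfl⟩, ?_, ?_, ?_⟩
    · rintro γ ⟨π, hπ, hproj, rfl⟩
      obtain ⟨f, hf⟩ := class_graph (hcs π hπ)
      exact ⟨f, by rw [hf, hproj]⟩
    · rintro γ ⟨π, hπ, hproj, rfl⟩ g
      refine ⟨gAct g π, class_act hCS' hπ g, ?_, (swap_gAct g π).symm⟩
      rw [snd_image_gAct, hproj]
    · rintro γ₁ ⟨π₁, h₁, hp₁, rfl⟩ γ₂ ⟨π₂, h₂, hp₂, rfl⟩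
      obtain ⟨b, hb⟩ := (hne π₀ h₀).image Prod.snd
      have hb₁ : b ∈ Prod.snd '' π₁ := by rw [hp₁]; exact hb
      have hb₂ : b ∈ Prod.snd '' π₂ := by rw [hp₂]; exact hb
      obtain ⟨g, rfl⟩ := class_translate hCS' h₁ h₂ hb₁ hb₂
      exact ⟨g, swap_gAct g π₁⟩
  · intro θ hθ
    ext γ
    simp only [Set.mem_setOf_eq, Set.mem_empty_iff_false, iff_false, not_exists]
    rintro π ⟨hπ, hproj, rfl⟩
    exact hθ ⟨π, hπ, hproj⟩

lemma inverse_wd {G B : Type} [Group G] {I : Set B} {Θ : Set (Set B)}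
    {F : Set B → Set (Set (B × G))} (hS : IsSPC I Θ F) :
    IsInvariantCrossSection (spcToCS I Θ F).1 (spcToCS I Θ F).2 := by
  obtain ⟨⟨hne, hdisj, hun⟩, hcls, hemp⟩ := hS
  have hS' : IsSPC I Θ F := ⟨⟨hne, hdisj, hun⟩, hcls, hemp⟩
  simp only [spcToCS]
  refine ⟨⟨?_, ?_, ?_⟩, ?_, ?_⟩
  · rintro π ⟨θ, hθ, γ, hγ, rfl⟩
    obtain ⟨f, rfl⟩ := graph_of hS' hθ hγ
    obtain ⟨b, hb⟩ := hne θ hθ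
    exact ⟨(f b, b), (b, f b), ⟨hb, rfl⟩, rfl⟩
  · rintro π₁ ⟨θ₁, hθ₁, γ₁, hγ₁, rfl⟩ π₂ ⟨θ₂, hθ₂, γ₂, hγ₂, rfl⟩ hne'
    refine Set.disjoint_left.mpr fun q hq₁ hq₂ => hne' ?_
    simp only [id_eq] at hq₁ hq₂
    rw [mem_swap_image] at hq₁ hq₂
    obtain ⟨f₁, hf₁⟩ := graph_of hS' hθ₁ hγ₁
    obtain ⟨f₂, hf₂⟩ := graph_of hS' hθ₂ hγ₂
    have hb₁ : q.2 ∈ θ₁ := by rw [hf₁] at hq₁; exact hq₁.1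
    have hb₂ : q.2 ∈ θ₂ := by rw [hf₂] at hq₂; exact hq₂.1
    have hθeq : θ₁ = θ₂ := by
      by_contra h'
      exact Set.disjoint_left.mp (hdisj hθ₁ hθ₂ h') hb₁ hb₂
    subst hθeq
    obtain ⟨h, rfl⟩ := (hcls θ₁ hθ₁).2.2.2 γ₁ hγ₁ γ₂ hγ₂
    rw [mem_gTranslate] at hq₂
    have e₁ : q.1 = f₁ q.2 := by rw [hf₁] at hq₁; exact hq₁.2
    have e₂ : h⁻¹ * q.1 = f₁ q.2 := by rw [hf₁] at hq₂; exact hq₂.2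
    have hinv1 : h⁻¹ = 1 := by
      have : h⁻¹ * q.1 = 1 * q.1 := by rw [e₂, ← e₁, one_mul]
      exact mul_right_cancel this
    have : h = 1 := inv_eq_one.mp hinv1
    subst this
    rw [gTranslate_one]
  · ext q
    simp only [Set.mem_sUnion, Set.mem_setOf_eq]
    constructor
    · rintro ⟨π, ⟨θ, hθ, γ, hγ, rfl⟩, hq⟩
      rw [mem_swap_image] at hq
      obtain ⟨f, hf⟩ := graph_of hS' hθ hγ
      rw [hf] at hq
      rw [← hun]
      exact ⟨θ, hθ, hq.1⟩
    · intro hq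
      rw [← hun] at hq
      obtain ⟨θ, hθ, hbθ⟩ := hq
      obtain ⟨γ₀, hγ₀⟩ := (hcls θ hθ).1
      obtain ⟨f₀, hf₀⟩ := graph_of hS' hθ hγ₀
      refine ⟨Prod.swap '' gTranslate (q.1 * (f₀ q.2)⁻¹) γ₀,
        ⟨θ, hθ, _, (hcls θ hθ).2.2.1 γ₀ hγ₀ _, rfl⟩, ?_⟩
      rw [mem_swap_image, mem_gTranslate, hf₀]
      refine ⟨hbθ, ?_⟩
      simp [mul_inv_rev, mul_assoc]
  · intro g
    constructor
    · ext p
      rw [mem_gAct]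
      simp only [Set.mem_setOf_eq]
    · apply Set.Subset.antisymm
      · rintro π' ⟨π, ⟨θ, hθ, γ, hγ, rfl⟩, rfl⟩
        rw [gAct_swap]
        exact ⟨θ, hθ, gTranslate g γ, (hcls θ hθ).2.2.1 γ hγ g, rfl⟩
      · rintro π ⟨θ, hθ, γ, hγ, rfl⟩
        refine ⟨gAct g⁻¹ (Prod.swap '' γ), ?_, ?_⟩
        · rw [gAct_swap]
          exact ⟨θ, hθ, gTranslate g⁻¹ γ, (hcls θ hθ).2.2.1 γ hγ g⁻¹, rfl⟩
        · rw [gAct_comp]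
          simp [gAct_one]
  · rintro π ⟨θ, hθ, γ, hγ, rfl⟩ p hp q hq hpq
    obtain ⟨f, hf⟩ := graph_of hS' hθ hγ
    rw [mem_swap_image, hf] at hp hq
    simp only [Set.mem_setOf_eq, Prod.fst_swap, Prod.snd_swap] at hp hq
    rw [hp.2, hq.2, hpq]



lemma snd_swap_image {α β : Type} (s : Set (α × β)) :
    Prod.snd '' (Prod.swap '' s) = Prod.fst '' s := by
  simp [Set.image_image]

lemma fst_graph {G B : Type} {θ : Set B} (f : B → G) :
    Prod.fst '' {p : B × G | p.1 ∈ θ ∧ p.2 = f p.1} = θ := by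
  ext b
  constructor
  · rintro ⟨p, ⟨h1, _⟩, rfl⟩; exact h1
  · intro hb; exact ⟨(b, f b), ⟨hb, rfl⟩, rfl⟩

lemma cs_inv_one {G B : Type} [Group G] {Y : Set (G × B)} {P : Set (Set (G × B))}
    (hCS : IsInvariantCrossSection Y P) :
    spcToCS (csToSPC Y P).1 (csToSPC Y P).2.1 (csToSPC Y P).2.2 = (Y, P) := by
  simp only [spcToCS, csToSPC, Prod.mk.injEq]
  constructor
  · ext p
    simp only [Set.mem_setOf_eq, Set.mem_image]
    constructor
    · rintro ⟨q, hq, hq2⟩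
      have h1 : (p.1 * q.1⁻¹ * q.1, q.2) ∈ gAct (p.1 * q.1⁻¹) Y := ⟨q, hq, rfl⟩
      rw [(hCS.2.1 (p.1 * q.1⁻¹)).1, inv_mul_cancel_right, hq2] at h1
      exact h1
    · intro hp; exact ⟨p, hp, rfl⟩
  · ext π
    simp only [Set.mem_setOf_eq]
    constructor
    · rintro ⟨θ, ⟨π₀, h₀, rfl⟩, γ, ⟨π', hπ', hproj, rfl⟩, rfl⟩
      rw [swap_swap_image]; exact hπ'
    · intro hπ
      exact ⟨Prod.snd '' π, ⟨π, hπ, rfl⟩, Prod.swap '' π, ⟨π, hπ, rfl, rfl⟩,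
        (swap_swap_image π).symm⟩

lemma cs_inv_two {G B : Type} [Group G] {I : Set B} {Θ : Set (Set B)}
    {F : Set B → Set (Set (B × G))} (hS : IsSPC I Θ F) :
    csToSPC (spcToCS I Θ F).1 (spcToCS I Θ F).2 = (I, Θ, F) := by
  obtain ⟨⟨hne, hdisj, hun⟩, hcls, hemp⟩ := hS
  have hS' : IsSPC I Θ F := ⟨⟨hne, hdisj, hun⟩, hcls, hemp⟩
  simp only [csToSPC, spcToCS, Prod.mk.injEq]
  refine ⟨?_, ?_, ?_⟩
  · ext b
    simp only [Set.mem_image, Set.mem_setOf_eq]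
    constructor
    · rintro ⟨p, hp, rfl⟩; exact hp
    · intro hb; exact ⟨((1 : G), b), hb, rfl⟩
  · ext θ
    simp only [Set.mem_image, Set.mem_setOf_eq]
    constructor
    · rintro ⟨π, ⟨θ₀, hθ₀, γ, hγ, rfl⟩, rfl⟩
      obtain ⟨f, rfl⟩ := graph_of hS' hθ₀ hγ
      rw [snd_swap_image, fst_graph]
      exact hθ₀
    · intro hθ
      obtain ⟨γ, hγ⟩ := (hcls θ hθ).1
      refine ⟨Prod.swap '' γ, ⟨θ, hθ, γ, hγ, rfl⟩, ?_⟩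
      obtain ⟨f, rfl⟩ := graph_of hS' hθ hγ
      rw [snd_swap_image, fst_graph]
  · funext θ
    ext γ'
    simp only [Set.mem_setOf_eq]
    constructor
    · rintro ⟨π, ⟨θ₀, hθ₀, γ, hγ, rfl⟩, hproj, rfl⟩
      obtain ⟨f, hf⟩ := graph_of hS' hθ₀ hγ
      have hθeq : θ₀ = θ := by rw [← hproj, hf, snd_swap_image, fst_graph]
      rw [swap_swap_image, ← hθeq]
      exact hγ
    · intro hγ'
      by_cases hθ : θ ∈ Θ
      · refine ⟨Prod.swap '' γ', ⟨θ, hθ, γ', hγ', rfl⟩, ?_, (swap_swap_image γ').symm⟩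
        obtain ⟨f, hf⟩ := graph_of hS' hθ hγ'
        rw [hf, snd_swap_image, fst_graph]
      · rw [hemp θ hθ] at hγ'
        exact absurd hγ' (Set.notMem_empty _)

lemma cs_order_iso {G B : Type} [Group G] {Y : Set (G × B)} {P : Set (Set (G × B))}
    {Y' : Set (G × B)} {P' : Set (Set (G × B))}
    (hCS : IsInvariantCrossSection Y P) (hCS' : IsInvariantCrossSection Y' P') :
    SPle Y P Y' P' ↔
      SPCle (csToSPC Y P).1 (csToSPC Y P).2.1 (csToSPC Y P).2.2
        (csToSPC Y' P').1 (csToSPC Y' P').2.1 (csToSPC Y' P').2.2 := by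
  simp only [SPle, SPCle, csToSPC]
  constructor
  · rintro ⟨hYY, hPP⟩
    refine ⟨Set.image_mono hYY, ?_, ?_⟩
    · rintro θ ⟨π, hπ, rfl⟩
      obtain ⟨ϑ, hϑ, hsub⟩ := hPP π hπ
      exact ⟨Prod.snd '' ϑ, ⟨ϑ, hϑ, rfl⟩, Set.image_mono hsub⟩
    · rintro θ ⟨π, hπ, rfl⟩ τ' ⟨ϑ₁, hϑ₁, rfl⟩ hsub
      obtain ⟨ϑ₀, hϑ₀, hπϑ₀⟩ := hPP π hπ
      obtain ⟨b₀, hb₀⟩ := (hCS.1.1 π hπ).image Prod.snd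
      have hb₀ϑ₀ : b₀ ∈ Prod.snd '' ϑ₀ := Set.image_mono hπϑ₀ hb₀
      have hb₀ϑ₁ : b₀ ∈ Prod.snd '' ϑ₁ := hsub hb₀
      have main : ∀ g : G, {p ∈ Prod.swap '' gAct g ϑ₀ | p.1 ∈ Prod.snd '' π}
          = Prod.swap '' gAct g π := by
        intro g
        rw [swap_restrict]
        have h := restrict_eq (hCS'.2.2 _ (class_act hCS' hϑ₀ g)) (gAct_mono hπϑ₀)
        rw [snd_image_gAct] at h
        rw [h]
      refine Set.Subset.antisymm ?_ ?_
      · rintro γ' ⟨γ, ⟨ϑ, hϑ, hϑproj, rfl⟩, rfl⟩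
        have hb₀ϑ : b₀ ∈ Prod.snd '' ϑ := by rw [hϑproj]; exact hb₀ϑ₁
        obtain ⟨g, rfl⟩ := class_translate hCS' hϑ₀ hϑ hb₀ϑ₀ hb₀ϑ
        exact ⟨gAct g π, class_act hCS hπ g, by rw [snd_image_gAct], (main g)⟩
      · rintro γ' ⟨π', hπ', hproj', rfl⟩
        have hb₀π' : b₀ ∈ Prod.snd '' π' := by rw [hproj']; exact hb₀
        obtain ⟨g, rfl⟩ := class_translate hCS hπ hπ' hb₀ hb₀π'
        refine ⟨Prod.swap '' gAct g ϑ₀, ⟨gAct g ϑ₀, class_act hCS' hϑ₀ g, ?_, rfl⟩, main g⟩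
        rw [snd_image_gAct]
        obtain ⟨g₁, hg₁⟩ := class_translate hCS' hϑ₀ hϑ₁ hb₀ϑ₀ hb₀ϑ₁
        rw [hg₁]
        exact (snd_image_gAct g₁ ϑ₀).symm
  · rintro ⟨hIJ, hΘ, hres⟩
    constructor
    · intro p hp
      obtain ⟨q, hq, hq2⟩ := hIJ ⟨p, hp, rfl⟩
      have h1 : (p.1 * q.1⁻¹ * q.1, q.2) ∈ gAct (p.1 * q.1⁻¹) Y' := ⟨q, hq, rfl⟩
      rw [(hCS'.2.1 (p.1 * q.1⁻¹)).1, inv_mul_cancel_right, hq2] at h1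
      exact h1
    · intro π hπ
      obtain ⟨τ', hτ', hθτ⟩ := hΘ _ ⟨π, hπ, rfl⟩
      obtain ⟨ϑ₁, hϑ₁, rfl⟩ := hτ'
      have hre := hres _ ⟨π, hπ, rfl⟩ _ ⟨ϑ₁, hϑ₁, rfl⟩ hθτ
      have hmem : Prod.swap '' π ∈
          {γ : Set (B × G) | ∃ π' ∈ P, Prod.snd '' π' = Prod.snd '' π ∧ γ = Prod.swap '' π'} :=
        ⟨π, hπ, rfl, rfl⟩
      rw [← hre] at hmem
      obtain ⟨γ, ⟨ϑ, hϑ, hϑproj, rfl⟩, hγeq0⟩ := hmem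
      have hγeq : {p ∈ Prod.swap '' ϑ | p.1 ∈ Prod.snd '' π} = Prod.swap '' π := hγeq0
      rw [swap_restrict] at hγeq
      have h2 := congrArg (Set.image Prod.swap) hγeq
      rw [swap_swap_image, swap_swap_image] at h2
      refine ⟨ϑ, hϑ, ?_⟩
      rw [← h2]
      exact Set.sep_subset _ _


/-- `CS(G×B)` is order-isomorphic to the poset `Rh⁰_B(G)` of SPCs on `B`
over `G`, via the explicit map `csToSPC` with explicit inverse `spcToCS`:
both maps are well defined, mutually inverse, and `csToSPC` is an order embedding
onto `Rh⁰_B(G)`, hence an order isomorphism. -/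

theorem cs_orderIso_rhodes (G B : Type) [Group G] [Finite G] [Finite B] :
    -- well-definedness of the forward map
    (∀ (Y : Set (G × B)) (P : Set (Set (G × B))), IsInvariantCrossSection Y P →
      IsSPC (csToSPC Y P).1 (csToSPC Y P).2.1 (csToSPC Y P).2.2) ∧
    -- well-definedness of the inverse map
    (∀ (I : Set B) (Θ : Set (Set B)) (F : Set B → Set (Set (B × G))), IsSPC I Θ F →
      IsInvariantCrossSection (spcToCS I Θ F).1 (spcToCS I Θ F).2) ∧
    -- the two maps are mutually inverse
    (∀ (Y : Set (G × B)) (P : Set (Set (G × B))), IsInvariantCrossSection Y P →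
      spcToCS (csToSPC Y P).1 (csToSPC Y P).2.1 (csToSPC Y P).2.2 = (Y, P)) ∧
    (∀ (I : Set B) (Θ : Set (Set B)) (F : Set B → Set (Set (B × G))), IsSPC I Θ F →
      csToSPC (spcToCS I Θ F).1 (spcToCS I Θ F).2 = (I, Θ, F)) ∧
    -- the forward map is an order isomorphism
    (∀ (Y : Set (G × B)) (P : Set (Set (G × B)))
       (Y' : Set (G × B)) (P' : Set (Set (G × B))),
      IsInvariantCrossSection Y P → IsInvariantCrossSection Y' P' →
        (SPle Y P Y' P' ↔
          SPCle (csToSPC Y P).1 (csToSPC Y P).2.1 (csToSPC Y P).2.2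
            (csToSPC Y' P').1 (csToSPC Y' P').2.1 (csToSPC Y' P').2.2)) :=
  ⟨fun _ _ h => forward_wd h, fun _ _ _ h => inverse_wd h, fun _ _ h => cs_inv_one h,
    fun _ _ _ h => cs_inv_two h, fun _ _ _ _ h h' => cs_order_iso h h'⟩
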